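/- For p ∈ (0, 1/2) and any integers m ≥ 1 and k ≥ 1, the majority-rule path correctness probability satisfies (1 - p_m)^k (1 - q_m)^k > (1-p)^k (1-q)^k, whenever q ∈ (0, 1/2), where p_m and q_m are the majority error probabilities for recognition and advice respectively. -/

import Mathlib

open Finset

lemma majority_gt (p : ℝ) (hp0 : 0 < p) (hp : p < 1 / 2) (m : ℕ) (hm : 2 ≤ m) :
    1 - p < ∑ i ∈ Finset.Icc ((m + 1) / 2) m,
      (m.choose i : ℝ) * (1 - p) ^ i * p ^ (m - i) := by
  set s : ℝ := 1 - p with hsdef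
  have hps : p < s := by simp only [hsdef]; linarith
  have hs0 : 0 < s := lt_trans hp0 hps
  set t : ℕ := (m + 1) / 2 with htdef
  have ht1 : 1 ≤ t := by omega
  have h2t : 2 * t ≤ m + 1 := by omega
  have htm : t ≤ m + 1 := by omega
  set c : ℕ → ℝ := fun i => (m.choose i : ℝ) * s ^ i * p ^ (m - i) with hc
  have hcnonneg : ∀ i, 0 ≤ c i := by
    intro i
    have : (0:ℝ) ≤ (m.choose i : ℝ) := Nat.cast_nonneg _
    simp only [hc]
    positivity
  have hsum1 : ∑ i ∈ Finset.range (m + 1), c i = 1 := by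
    have h := add_pow s p m
    have hsp : s + p = 1 := by simp [hsdef]
    rw [hsp, one_pow] at h
    rw [h]
    apply Finset.sum_congr rfl
    intro i _
    simp only [hc]; ring
  have hsplit : ∑ i ∈ Finset.range t, c i + ∑ i ∈ Finset.Icc t m, c i = 1 := by
    rw [← hsum1, Finset.range_eq_Ico, ← Finset.Ico_add_one_right_eq_Icc,
      Finset.sum_Ico_consecutive _ (Nat.zero_le t) htm, ← Finset.range_eq_Ico]
  -- key inequality: ∑_{i<t} s*c i < ∑_{j∈Icc t m} p*c j
  have key : ∑ i ∈ Finset.range t, s * c i < ∑ j ∈ Finset.Icc t m, p * c j := by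
    have step1 : ∑ i ∈ Finset.range t, s * c i
        < ∑ i ∈ Finset.range t, p * c (m - i) := by
      apply Finset.sum_lt_sum
      · intro i hi
        have hit : i < t := Finset.mem_range.mp hi
        have h2i : 2 * i + 1 ≤ m := by omega
        have him : i ≤ m := by omega
        have hmm : m - (m - i) = i := by omega
        have hsym : m.choose (m - i) = m.choose i := Nat.choose_symm him
        have hC : (0:ℝ) ≤ (m.choose i : ℝ) := Nat.cast_nonneg _
        have hrw1 : c (m - i) = (m.choose i : ℝ) * s ^ (m - i) * p ^ i := by
          simp only [hc, hsym, hmm]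
        have hrw2 : c i = (m.choose i : ℝ) * s ^ i * p ^ (m - i) := rfl
        rw [hrw1, hrw2]
        obtain ⟨e, he⟩ : ∃ e, m - i = i + 1 + e := ⟨m - 1 - 2 * i, by omega⟩
        rw [he]
        calc s * ((m.choose i : ℝ) * s ^ i * p ^ (i + 1 + e))
            = ((m.choose i : ℝ) * s ^ (i + 1) * p ^ (i + 1)) * p ^ e := by ring
          _ ≤ ((m.choose i : ℝ) * s ^ (i + 1) * p ^ (i + 1)) * s ^ e := by
              apply mul_le_mul_of_nonneg_left (pow_le_pow_left₀ hp0.le hps.le e)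
              positivity
          _ = p * ((m.choose i : ℝ) * s ^ (i + 1 + e) * p ^ i) := by ring
      · refine ⟨0, Finset.mem_range.mpr (by omega), ?_⟩
        obtain ⟨n, rfl⟩ : ∃ n, m = n + 1 := ⟨m - 1, by omega⟩
        simp only [hc, Nat.sub_zero, Nat.choose_zero_right, Nat.choose_self,
          Nat.cast_one, pow_zero, Nat.add_sub_cancel, Nat.sub_self, one_mul, mul_one]
        have h1 : p ^ n < s ^ n := pow_lt_pow_left₀ hps hp0.le (by omega)
        have hsp0 : 0 < p * s := mul_pos hp0 hs0
        calc s * p ^ (n + 1) = (p * s) * p ^ n := by ring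
          _ < (p * s) * s ^ n := mul_lt_mul_of_pos_left h1 hsp0
          _ = p * s ^ (n + 1) := by ring
    have step2 : ∑ i ∈ Finset.range t, p * c (m - i)
        = ∑ j ∈ (Finset.range t).image (fun i => m - i), p * c j := by
      rw [Finset.sum_image]
      intro a ha b hb hab
      have ha' := Finset.mem_range.mp ha
      have hb' := Finset.mem_range.mp hb
      simp only at hab
      omega
    have step3 : ∑ j ∈ (Finset.range t).image (fun i => m - i), p * c j
        ≤ ∑ j ∈ Finset.Icc t m, p * c j := by
      apply Finset.sum_le_sum_of_subset_of_nonneg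
      · intro j hj
        obtain ⟨i, hi, rfl⟩ := Finset.mem_image.mp hj
        have := Finset.mem_range.mp hi
        exact Finset.mem_Icc.mpr ⟨by omega, by omega⟩
      · intro j _ _
        exact mul_nonneg hp0.le (hcnonneg j)
    linarith
  have hexp : ∀ j, c j = s * c j + p * c j := by
    intro j
    have hsp : s + p = 1 := by simp [hsdef]
    nlinarith [hcnonneg j]
  have hIcc : ∑ j ∈ Finset.Icc t m, c j
      = ∑ j ∈ Finset.Icc t m, s * c j + ∑ j ∈ Finset.Icc t m, p * c j := by
    rw [← Finset.sum_add_distrib]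
    exact Finset.sum_congr rfl fun j _ => hexp j
  have hs_eq : s = ∑ i ∈ Finset.range t, s * c i + ∑ j ∈ Finset.Icc t m, s * c j := by
    rw [← Finset.mul_sum, ← Finset.mul_sum, ← mul_add, hsplit, mul_one]
  show s < ∑ i ∈ Finset.Icc t m, c i
  linarith [key, hIcc, hs_eq]

theorem swarm_path_correctness_gt (p q : ℝ)
    (hp0 : 0 < p) (hp : p < 1 / 2) (hq0 : 0 < q) (hq : q < 1 / 2)
    (m k : ℕ) (hm : 2 ≤ m) (hk : 1 ≤ k) :
    (1 - p) ^ k * (1 - q) ^ k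
      < (1 - (1 - ∑ i ∈ Finset.Icc ((m + 1) / 2) m,
            (m.choose i : ℝ) * (1 - p) ^ i * p ^ (m - i))) ^ k
        * (1 - (1 - ∑ i ∈ Finset.Icc ((m + 1) / 2) m,
            (m.choose i : ℝ) * (1 - q) ^ i * q ^ (m - i))) ^ k := by
  have hP := majority_gt p hp0 hp m hm
  have hQ := majority_gt q hq0 hq m hm
  set Sp := ∑ i ∈ Finset.Icc ((m + 1) / 2) m,
      (m.choose i : ℝ) * (1 - p) ^ i * p ^ (m - i)
  set Sq := ∑ i ∈ Finset.Icc ((m + 1) / 2) m,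
      (m.choose i : ℝ) * (1 - q) ^ i * q ^ (m - i)
  have h1 : (1:ℝ) - (1 - Sp) = Sp := by ring
  have h2 : (1:ℝ) - (1 - Sq) = Sq := by ring
  rw [h1, h2]
  have hp1 : (0:ℝ) ≤ 1 - p := by linarith
  have hq1 : (0:ℝ) < 1 - q := by linarith
  have hP' : (1 - p) ^ k < Sp ^ k := pow_lt_pow_left₀ hP hp1 (by omega)
  have hQ' : (1 - q) ^ k ≤ Sq ^ k := pow_le_pow_left₀ hq1.le hQ.le k
  have hSp : (0:ℝ) ≤ Sp ^ k := pow_nonneg (by linarith) k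
  exact mul_lt_mul hP' hQ' (pow_pos hq1 k) hSp
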